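/- Let S ⊆ F_p^2 with |S| = kp for some 1 ≤ k ≤ p. If S is equidistributed in at least p-1 directions (i.e., has at most one special direction), then S is a union of k parallel lines. -/
import Mathlib


/-- Number of points of `S` on the line through `x` with direction vector `u`. -/
def lineCount (p : ℕ) [Fact p.Prime] (S : Finset (ZMod p × ZMod p))
    (u x : ZMod p × ZMod p) : ℕ :=
  (S.filter fun w => ∃ t : ZMod p, w = x + t • u).card

/-- Direction vectors of the `p+1` directions: `some m` has slope `m`, `none` is vertical. -/
def dirVec (p : ℕ) : Option (ZMod p) → ZMod p × ZMod p
  | none => (0, 1)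
  | some m => (1, m)

/-- `S` is equidistributed in the direction of the vector `u`. -/
def Equidistributed (p : ℕ) [Fact p.Prime] (S : Finset (ZMod p × ZMod p))
    (u : ZMod p × ZMod p) : Prop :=
  ∀ x y : ZMod p × ZMod p, lineCount p S u x = lineCount p S u y

open Classical in
/-- The set of special (non-equidistributed) directions of `S`. -/
noncomputable def specialDirs (p : ℕ) [Fact p.Prime] (S : Finset (ZMod p × ZMod p)) :
    Finset (Option (ZMod p)) :=
  Finset.univ.filter fun d => ¬ Equidistributed p S (dirVec p d)

/-- The "intercept" of the line through `x` with direction `d`. -/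
def slopeAux (p : ℕ) : Option (ZMod p) → ZMod p × ZMod p → ZMod p
  | none, x => x.1
  | some m, x => x.2 - m * x.1

/-- Canonical representative of the line with direction `d` and intercept `c`. -/
def baseAux (p : ℕ) : Option (ZMod p) → ZMod p → ZMod p × ZMod p
  | none, c => (c, 0)
  | some _, c => (0, c)

lemma slopeAux_baseAux (p : ℕ) (d : Option (ZMod p)) (c : ZMod p) :
    slopeAux p d (baseAux p d c) = c := by
  cases d <;> simp [slopeAux, baseAux]

lemma mem_line_iff (p : ℕ) (d : Option (ZMod p)) (x w : ZMod p × ZMod p) :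
    (∃ t : ZMod p, w = x + t • dirVec p d) ↔ slopeAux p d w = slopeAux p d x := by
  obtain ⟨a, b⟩ := w
  obtain ⟨c, e⟩ := x
  cases d with
  | none =>
    simp only [dirVec, slopeAux, Prod.smul_mk, smul_eq_mul, Prod.mk_add_mk, Prod.mk.injEq,
      mul_zero, mul_one, add_zero]
    constructor
    · rintro ⟨t, h1, h2⟩; exact h1
    · intro h; exact ⟨b - e, h, by ring⟩
  | some m =>
    simp only [dirVec, slopeAux, Prod.smul_mk, smul_eq_mul, Prod.mk_add_mk, Prod.mk.injEq,
      mul_one]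
    constructor
    · rintro ⟨t, h1, h2⟩; subst h1; subst h2; ring
    · intro h; exact ⟨a - c, by ring, by linear_combination h⟩

lemma lineCount_eq (p : ℕ) [Fact p.Prime] (S : Finset (ZMod p × ZMod p))
    (d : Option (ZMod p)) (x : ZMod p × ZMod p) :
    lineCount p S (dirVec p d) x
      = (S.filter fun w => slopeAux p d w = slopeAux p d x).card := by
  unfold lineCount
  congr 1
  exact Finset.filter_congr fun w _ => mem_line_iff p d x w

lemma fiber_card (p : ℕ) [Fact p.Prime] (d : Option (ZMod p)) (c : ZMod p) :
    (Finset.univ.filter fun w : ZMod p × ZMod p => slopeAux p d w = c).card = p := by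
  have himg : (Finset.univ.filter fun w : ZMod p × ZMod p => slopeAux p d w = c)
      = Finset.image (fun t : ZMod p => baseAux p d c + t • dirVec p d) Finset.univ := by
    ext w
    simp only [Finset.mem_filter, Finset.mem_univ, true_and, Finset.mem_image]
    constructor
    · intro hw
      obtain ⟨t, ht⟩ := (mem_line_iff p d (baseAux p d c) w).2 (by rw [hw, slopeAux_baseAux])
      exact ⟨t, ht.symm⟩
    · rintro ⟨t, rfl⟩
      rw [(mem_line_iff p d (baseAux p d c) _).1 ⟨t, rfl⟩, slopeAux_baseAux]
  have hinj : Function.Injective (fun t : ZMod p => baseAux p d c + t • dirVec p d) := by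
    intro s t h
    cases d with
    | none => have := congrArg Prod.snd h; simpa [baseAux, dirVec] using this
    | some m => have := congrArg Prod.fst h; simpa [baseAux, dirVec] using this
  rw [himg, Finset.card_image_of_injective _ hinj, Finset.card_univ, ZMod.card]

lemma unique_dir (p : ℕ) [Fact p.Prime] (x w : ZMod p × ZMod p) (hne : w ≠ x) :
    (Finset.univ.filter fun d : Option (ZMod p) =>
      slopeAux p d w = slopeAux p d x).card = 1 := by
  by_cases h1 : w.1 = x.1
  · have h2 : w.2 ≠ x.2 := fun h2 => hne (Prod.ext h1 h2)
    have : (Finset.univ.filter fun d : Option (ZMod p) =>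
        slopeAux p d w = slopeAux p d x) = {none} := by
      ext d
      simp only [Finset.mem_filter, Finset.mem_univ, true_and, Finset.mem_singleton]
      cases d with
      | none => simpa [slopeAux] using h1
      | some m =>
        simp only [slopeAux, h1]
        constructor
        · intro hh
          exact absurd (by linear_combination hh) h2
        · intro hh; exact absurd hh (by simp)
    rw [this, Finset.card_singleton]
  · have : (Finset.univ.filter fun d : Option (ZMod p) =>
        slopeAux p d w = slopeAux p d x) = {some ((w.2 - x.2) / (w.1 - x.1))} := by
      have hd : w.1 - x.1 ≠ 0 := sub_ne_zero.mpr h1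
      ext d
      simp only [Finset.mem_filter, Finset.mem_univ, true_and, Finset.mem_singleton]
      cases d with
      | none => simpa [slopeAux] using h1
      | some m =>
        simp only [slopeAux, Option.some.injEq]
        constructor
        · intro hh
          field_simp
          linear_combination -hh
        · intro hh; subst hh; field_simp; ring
    rw [this, Finset.card_singleton]

lemma sum_lineCount (p : ℕ) [Fact p.Prime] (S : Finset (ZMod p × ZMod p))
    (x : ZMod p × ZMod p) :
    ∑ d : Option (ZMod p), lineCount p S (dirVec p d) x
      = S.card + (if x ∈ S then p else 0) := by
  classical
  have hrw : ∀ d : Option (ZMod p), lineCount p S (dirVec p d) x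
      = ∑ s ∈ S, if slopeAux p d s = slopeAux p d x then 1 else 0 := by
    intro d; rw [lineCount_eq, Finset.card_filter]
  simp_rw [hrw]
  rw [Finset.sum_comm]
  have key : ∀ s ∈ S,
      (∑ d : Option (ZMod p), if slopeAux p d s = slopeAux p d x then 1 else 0)
        = if s = x then p + 1 else 1 := by
    intro s _
    rw [Finset.sum_boole]
    by_cases hs : s = x
    · subst hs
      simp only [if_pos rfl]
      norm_cast
      simp only [Finset.filter_true, if_true, Finset.card_univ, Fintype.card_option,
        ZMod.card]
    · rw [if_neg hs]
      norm_cast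
      exact unique_dir p x s hs
  rw [Finset.sum_congr rfl key]
  have : ∀ s : ZMod p × ZMod p, (if s = x then p + 1 else 1)
      = 1 + (if s = x then p else 0) := by
    intro s; split_ifs <;> omega
  simp_rw [this]
  rw [Finset.sum_add_distrib, Finset.sum_const, smul_eq_mul, mul_one,
    Finset.sum_ite_eq' S x (fun _ => p)]

lemma equid_count (p : ℕ) [Fact p.Prime] (S : Finset (ZMod p × ZMod p))
    (d : Option (ZMod p)) (hd : Equidistributed p S (dirVec p d)) (x : ZMod p × ZMod p) :
    p * lineCount p S (dirVec p d) x = S.card := by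
  classical
  have hpart : ∑ c : ZMod p, lineCount p S (dirVec p d) (baseAux p d c) = S.card := by
    have : ∀ c : ZMod p, lineCount p S (dirVec p d) (baseAux p d c)
        = (S.filter fun s => slopeAux p d s = c).card := by
      intro c; rw [lineCount_eq, slopeAux_baseAux]
    simp_rw [this]
    exact (Finset.card_eq_sum_card_fiberwise (fun s _ => Finset.mem_univ (slopeAux p d s))).symm
  calc p * lineCount p S (dirVec p d) x
      = ∑ _c : ZMod p, lineCount p S (dirVec p d) x := by
        rw [Finset.sum_const, Finset.card_univ, ZMod.card, smul_eq_mul]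
    _ = ∑ c : ZMod p, lineCount p S (dirVec p d) (baseAux p d c) :=
        Finset.sum_congr rfl fun c _ => hd x (baseAux p d c)
    _ = S.card := hpart

lemma line_full (p : ℕ) [Fact p.Prime] (k : ℕ) (S : Finset (ZMod p × ZMod p))
    (hcard : S.card = k * p) (d₀ : Option (ZMod p))
    (H : ∀ d, d ≠ d₀ → Equidistributed p S (dirVec p d)) (x : ZMod p × ZMod p) :
    lineCount p S (dirVec p d₀) x = if x ∈ S then p else 0 := by
  classical
  have hp : 0 < p := (Fact.out : p.Prime).pos
  have hsum := sum_lineCount p S x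
  rw [← Finset.add_sum_erase _ _ (Finset.mem_univ d₀)] at hsum
  have herase : ∑ d ∈ Finset.univ.erase d₀, lineCount p S (dirVec p d) x = p * k := by
    have hval : ∀ d ∈ Finset.univ.erase d₀, lineCount p S (dirVec p d) x = k := by
      intro d hd
      have hne : d ≠ d₀ := (Finset.mem_erase.mp hd).1
      have := equid_count p S d (H d hne) x
      rw [hcard, mul_comm k p] at this
      exact Nat.eq_of_mul_eq_mul_left hp this
    rw [Finset.sum_congr rfl hval, Finset.sum_const, smul_eq_mul,
      Finset.card_erase_of_mem (Finset.mem_univ d₀), Finset.card_univ,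
      Fintype.card_option, ZMod.card]
    simp
  rw [herase, hcard, mul_comm k p] at hsum
  split_ifs at hsum ⊢ <;> omega

lemma baseAux_slopeAux_baseAux (p : ℕ) (d : Option (ZMod p)) (c : ZMod p) :
    baseAux p d (slopeAux p d (baseAux p d c)) = baseAux p d c := by
  rw [slopeAux_baseAux]

theorem stmt_1 (p : ℕ) [Fact p.Prime] (k : ℕ) (hk1 : 1 ≤ k) (hkp : k ≤ p)
    (S : Finset (ZMod p × ZMod p)) (hcard : S.card = k * p)
    (h : (specialDirs p S).card ≤ 1) :
    ∃ u : ZMod p × ZMod p, u ≠ 0 ∧ ∃ T : Finset (ZMod p × ZMod p), T.card = k ∧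
      (S : Set (ZMod p × ZMod p)) = ⋃ x ∈ T, {w | ∃ t : ZMod p, w = x + t • u} := by
  classical
  have hp : 0 < p := (Fact.out : p.Prime).pos
  -- produce a direction d₀ containing all special directions
  obtain ⟨d₀, hd₀⟩ : ∃ d₀, ∀ d, ¬ Equidistributed p S (dirVec p d) → d = d₀ := by
    have hh := Finset.card_le_one.mp h
    by_cases hne : (specialDirs p S).Nonempty
    · obtain ⟨e, he⟩ := hne
      refine ⟨e, fun d hd => hh d ?_ e he⟩
      simp only [specialDirs, Finset.mem_filter, Finset.mem_univ, true_and]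
      exact hd
    · refine ⟨none, fun d hd => absurd ⟨d, ?_⟩ hne⟩
      simp only [specialDirs, Finset.mem_filter, Finset.mem_univ, true_and]
      exact hd
  have H : ∀ d, d ≠ d₀ → Equidistributed p S (dirVec p d) := by
    intro d hd
    by_contra hc
    exact hd (hd₀ d hc)
  have hfull := line_full p k S hcard d₀ H
  -- each line through a point of S is entirely in S
  have hline : ∀ s ∈ S,
      (Finset.univ.filter fun w : ZMod p × ZMod p =>
        slopeAux p d₀ w = slopeAux p d₀ s) ⊆ S := by
    intro s hs
    have h1 : (S.filter fun w => slopeAux p d₀ w = slopeAux p d₀ s).card = p := by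
      rw [← lineCount_eq, hfull s, if_pos hs]
    have h2 := fiber_card p d₀ (slopeAux p d₀ s)
    have hsub : (S.filter fun w => slopeAux p d₀ w = slopeAux p d₀ s)
        ⊆ (Finset.univ.filter fun w : ZMod p × ZMod p =>
            slopeAux p d₀ w = slopeAux p d₀ s) :=
      Finset.filter_subset_filter _ (Finset.subset_univ S)
    have heq := Finset.eq_of_subset_of_card_le hsub (by rw [h1, h2])
    intro w hw
    have : w ∈ S.filter fun w => slopeAux p d₀ w = slopeAux p d₀ s := by rw [heq]; exact hw
    exact (Finset.mem_filter.mp this).1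
  refine ⟨dirVec p d₀, ?_, S.image (fun s => baseAux p d₀ (slopeAux p d₀ s)), ?_, ?_⟩
  · cases d₀ with
    | none => intro hu; exact one_ne_zero (congrArg Prod.snd hu)
    | some m => intro hu; exact one_ne_zero (congrArg Prod.fst hu)
  · -- cardinality of T
    set T := S.image (fun s => baseAux p d₀ (slopeAux p d₀ s)) with hT
    have hbi : S = T.biUnion (fun x => Finset.univ.filter fun w : ZMod p × ZMod p =>
        slopeAux p d₀ w = slopeAux p d₀ x) := by
      apply Finset.Subset.antisymm
      · intro s hs
        rw [Finset.mem_biUnion]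
        refine ⟨baseAux p d₀ (slopeAux p d₀ s), Finset.mem_image_of_mem _ hs, ?_⟩
        simp [slopeAux_baseAux]
      · intro w hw
        rw [Finset.mem_biUnion] at hw
        obtain ⟨x, hx, hwx⟩ := hw
        obtain ⟨s, hs, rfl⟩ := Finset.mem_image.mp hx
        apply hline s hs
        simp only [Finset.mem_filter, Finset.mem_univ, true_and] at hwx ⊢
        rw [hwx, slopeAux_baseAux]
    have hdisj : ∀ x ∈ T, ∀ y ∈ T, x ≠ y →
        Disjoint (Finset.univ.filter fun w : ZMod p × ZMod p =>
            slopeAux p d₀ w = slopeAux p d₀ x)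
          (Finset.univ.filter fun w : ZMod p × ZMod p =>
            slopeAux p d₀ w = slopeAux p d₀ y) := by
      intro x hx y hy hxy
      rw [Finset.disjoint_left]
      intro w hwx hwy
      simp only [Finset.mem_filter, Finset.mem_univ, true_and] at hwx hwy
      apply hxy
      obtain ⟨s, hs, rfl⟩ := Finset.mem_image.mp hx
      obtain ⟨s', hs', rfl⟩ := Finset.mem_image.mp hy
      rw [slopeAux_baseAux] at hwx hwy
      rw [← hwx, ← hwy]
    have hcardT : S.card = T.card * p := by
      rw [hbi, Finset.card_biUnion hdisj]
      rw [Finset.sum_congr rfl (fun x _ => fiber_card p d₀ (slopeAux p d₀ x)),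
        Finset.sum_const, smul_eq_mul]
    rw [hcard] at hcardT
    exact Nat.eq_of_mul_eq_mul_right hp hcardT.symm
  · -- set equality
    ext w
    simp only [Finset.coe_image, Set.mem_iUnion, Set.mem_setOf_eq, Finset.mem_coe,
      Finset.mem_image]
    constructor
    · intro hw
      refine ⟨baseAux p d₀ (slopeAux p d₀ w), ⟨w, hw, rfl⟩, ?_⟩
      rw [mem_line_iff, slopeAux_baseAux]
    · rintro ⟨x, hx, t, rfl⟩
      obtain ⟨s, hs, rfl⟩ := hx
      apply hline s hs
      simp only [Finset.mem_filter, Finset.mem_univ, true_and]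
      rw [(mem_line_iff p d₀ (baseAux p d₀ (slopeAux p d₀ s)) _).1 ⟨t, rfl⟩, slopeAux_baseAux]
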